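/- For every sufficiently large integer n divisible by 16, the derived graph F_{S_n} is n/100-connected, i.e., for every set U of at most n/100 vertices the graph F_{S_n} − U is connected. -/

import Mathlib

/-- `Sedge n x y z` : `{x, y, z}` with `x < y < z` is an edge of the `3`-uniform
hypergraph `S_n` on `{1, …, n}`, i.e. `x + y + z = n` or `x + y + z = 2n`. -/
def Sedge (n x y z : ℕ) : Prop :=
  1 ≤ x ∧ x < y ∧ y < z ∧ z ≤ n ∧ (x + y + z = n ∨ x + y + z = 2 * n)

/-- The derived graph `F_{S_n}`: `a` and `b` are adjacent iff some edge `x < y < z`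
of `S_n` has `{a, b} = {x, z}`. -/
def FS (n : ℕ) : SimpleGraph ℕ where
  Adj a b := (∃ y, Sedge n a y b) ∨ (∃ y, Sedge n b y a)
  symm := ⟨fun _ _ h => h.symm⟩
  loopless := ⟨fun a h => by
    rcases h with ⟨y, h1, h2, h3, h4, h5⟩ | ⟨y, h1, h2, h3, h4, h5⟩ <;> omega⟩

lemma adj1 (n a b : ℕ) (h1 : 1 ≤ a) (h2 : 2*a + b < n) (h3 : n < a + 2*b)
    (h4 : b ≤ n) : (FS n).Adj a b :=
  Or.inl ⟨n - a - b, h1, by omega, by omega, h4, by omega⟩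

lemma adj2 (n a b : ℕ) (h1 : 1 ≤ a) (h2 : 2*a + b < 2*n) (h3 : 2*n < a + 2*b)
    (h4 : b ≤ n) : (FS n).Adj a b :=
  Or.inl ⟨2*n - a - b, h1, by omega, by omega, h4, by omega⟩

lemma exists_avoid (U : Finset ℕ) (l r : ℕ) (h : U.card + l ≤ r) :
    ∃ x, l ≤ x ∧ x ≤ r ∧ x ∉ U := by
  have h1 : (Finset.Icc l r).card = r + 1 - l := Nat.card_Icc l r
  have h2 : (Finset.Icc l r \ U).Nonempty := by
    rw [← Finset.card_pos]
    have := Finset.le_card_sdiff U (Finset.Icc l r)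
    omega
  obtain ⟨x, hx⟩ := h2
  rw [Finset.mem_sdiff, Finset.mem_Icc] at hx
  exact ⟨x, hx.1.1, hx.1.2, hx.2⟩

/-- For every sufficiently large `n` divisible by `16`, the derived graph `F_{S_n}` is
`n/100`-connected: for every set `U ⊆ {1, …, n}` with `|U| ≤ n/100` the graph
`F_{S_n} − U` is connected. -/
theorem FS_highly_connected : ∃ N : ℕ, ∀ n : ℕ, N ≤ n → 16 ∣ n →
    ∀ U : Finset ℕ, U ⊆ Finset.Icc 1 n → 100 * U.card ≤ n →
      ((FS n).induce ((Finset.Icc 1 n : Set ℕ) \ (U : Set ℕ))).Connected := by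
  refine ⟨1600, ?_⟩
  intro n hn hdvd U hU hcard
  obtain ⟨m, rfl⟩ := hdvd
  have hm : 100 ≤ m := by omega
  have hun : 100 * U.card ≤ 16 * m := hcard
  set u := U.card with hu
  obtain ⟨a0, ha1, ha2, ha3⟩ := exists_avoid U (2*u+3) (3*u+3) (by omega)
  obtain ⟨b0, hb1, hb2, hb3⟩ := exists_avoid U (8*m) (8*m+u) (by omega)
  obtain ⟨e0, he1, he2, he3⟩ := exists_avoid U (8*m-u-1) (8*m-1) (by omega)
  obtain ⟨d0, hd1, hd2, hd3⟩ := exists_avoid U (16*m-u) (16*m) (by omega)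
  set s : Set ℕ := (Finset.Icc 1 (16*m) : Set ℕ) \ (U : Set ℕ) with hs
  have hmem : ∀ x : ℕ, 1 ≤ x → x ≤ 16*m → x ∉ U → x ∈ s := by
    intro x h1 h2 h3
    simp only [hs, Set.mem_diff, Finset.coe_Icc, Set.mem_Icc, Finset.mem_coe]
    exact ⟨⟨h1, h2⟩, h3⟩
  set G := (FS (16*m)).induce s with hG
  have R : ∀ (x y : ℕ) (hx : x ∈ s) (hy : y ∈ s), (FS (16*m)).Adj x y →
      G.Reachable ⟨x, hx⟩ ⟨y, hy⟩ := by
    intro x y hx hy h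
    exact SimpleGraph.Adj.reachable h
  have ma0 : a0 ∈ s := hmem a0 (by omega) (by omega) ha3
  have mb0 : b0 ∈ s := hmem b0 (by omega) (by omega) hb3
  have me0 : e0 ∈ s := hmem e0 (by omega) (by omega) he3
  have md0 : d0 ∈ s := hmem d0 (by omega) (by omega) hd3
  have rBA : G.Reachable ⟨b0, mb0⟩ ⟨a0, ma0⟩ :=
    (R a0 b0 ma0 mb0 (adj1 _ a0 b0 (by omega) (by omega) (by omega) (by omega))).symm
  have rEA : G.Reachable ⟨e0, me0⟩ ⟨a0, ma0⟩ :=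
    (R a0 e0 ma0 me0 (adj1 _ a0 e0 (by omega) (by omega) (by omega) (by omega))).symm
  have rDA : G.Reachable ⟨d0, md0⟩ ⟨a0, ma0⟩ :=
    (R e0 d0 me0 md0 (adj2 _ e0 d0 (by omega) (by omega) (by omega) (by omega))).symm.trans rEA
  have hreach : ∀ x : ↥s, G.Reachable x ⟨a0, ma0⟩ := by
    rintro ⟨v, hv⟩
    have hv' : 1 ≤ v ∧ v ≤ 16*m ∧ v ∉ U := by
      simp only [hs, Set.mem_diff, Finset.coe_Icc, Set.mem_Icc, Finset.mem_coe] at hv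
      exact ⟨hv.1.1, hv.1.2, hv.2⟩
    obtain ⟨hv1, hv2, hv3⟩ := hv'
    rcases le_or_gt v m with h | h
    · exact (R v b0 hv mb0 (adj1 _ v b0 (by omega) (by omega) (by omega) (by omega))).trans rBA
    rcases lt_or_ge v (8*m) with h2 | h2
    · exact (R v d0 hv md0 (adj2 _ v d0 (by omega) (by omega) (by omega) (by omega))).trans rDA
    rcases lt_or_ge v (12*m) with h3 | h3
    · exact (R a0 v ma0 hv (adj1 _ a0 v (by omega) (by omega) (by omega) (by omega))).symm
    rcases le_or_gt v (14*m) with h4 | h4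
    · obtain ⟨a, hal, har, haU⟩ :=
        exists_avoid U (2*(16*m - v)+1) (2*(16*m - v)+1+u) (by omega)
      have hma : a ∈ s := hmem a (by omega) (by omega) haU
      have r1 : G.Reachable ⟨v, hv⟩ ⟨a, hma⟩ :=
        (R a v hma hv (adj2 _ a v (by omega) (by omega) (by omega) (by omega))).symm
      rcases lt_or_ge a (8*m) with h5 | h5
      · exact r1.trans ((R a d0 hma md0
          (adj2 _ a d0 (by omega) (by omega) (by omega) (by omega))).trans rDA)
      · exact r1.trans
          (R a0 a ma0 hma (adj1 _ a0 a (by omega) (by omega) (by omega) (by omega))).symm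
    · exact (R e0 v me0 hv (adj2 _ e0 v (by omega) (by omega) (by omega) (by omega))).symm.trans rEA
  rw [SimpleGraph.connected_iff]
  exact ⟨fun x y => (hreach x).trans (hreach y).symm, ⟨⟨a0, ma0⟩⟩⟩
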